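/- Let S = ∂B(q, ε) be a sphere of radius ε in a complete smooth Riemannian manifold, specialized here to ℝⁿ, and let K ⊂ ℝⁿ be a C² submanifold with p ∈ K, a unit tangent vector v ∈ T_pK, a unit normal w ⊥ T_pK, and q = p + ε·w. Suppose the open ball B(q, ε) is disjoint from K. Then the second fundamental form satisfies II_w^K(v,v) ≤ II_w^S(v,v) = 1/ε, i.e. ⟨(d²/ds²)|_{s=0} α(s), w⟩ ≤ 1/ε where α is the geodesic of K with α(0)=p, α'(0)=v. -/

import Mathlib

open scoped RealInnerProductSpace

/-- `K` is a `k`-dimensional embedded `C²` submanifold of `ℝⁿ`. -/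
def IsC2Submanifold {n : ℕ} (k : ℕ) (K : Set (EuclideanSpace ℝ (Fin n))) : Prop :=
  ∀ p ∈ K, ∃ (U : Set (EuclideanSpace ℝ (Fin k))) (V : Set (EuclideanSpace ℝ (Fin n)))
    (φ : EuclideanSpace ℝ (Fin k) → EuclideanSpace ℝ (Fin n)),
      IsOpen U ∧ IsOpen V ∧ p ∈ V ∧ ContDiffOn ℝ 2 φ U ∧ Set.InjOn φ U ∧
      φ '' U = K ∩ V ∧ ∀ x ∈ U, Function.Injective (fderiv ℝ φ x)

/-- `w` is a normal vector to `K` at `p`. -/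
def IsNormalAt {n : ℕ} (K : Set (EuclideanSpace ℝ (Fin n)))
    (p w : EuclideanSpace ℝ (Fin n)) : Prop :=
  ∀ u ∈ tangentConeAt ℝ K p, ⟪u, w⟫ = 0

private lemma contDiff_one_deriv {g : ℝ → ℝ} (hg : ContDiff ℝ 2 g) :
    ContDiff ℝ 1 (deriv g) :=
  (contDiff_succ_iff_deriv.mp (show ContDiff ℝ (1 + 1) g from hg)).2.2

private lemma continuous_deriv_deriv {g : ℝ → ℝ} (hg : ContDiff ℝ 2 g) :
    Continuous (deriv (deriv g)) :=
  ((contDiff_succ_iff_deriv.mp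
    (show ContDiff ℝ (0 + 1) (deriv g) from contDiff_one_deriv hg)).2.2).continuous

/-- Second derivative test: at a global minimum of a C² function the second
derivative is nonnegative. -/
private lemma second_deriv_nonneg_of_min {g : ℝ → ℝ} (hg : ContDiff ℝ 2 g)
    (hmin : ∀ s, g 0 ≤ g s) : 0 ≤ deriv (deriv g) 0 := by
  by_contra hneg
  push_neg at hneg
  -- deriv g 0 = 0
  have hdiff : Differentiable ℝ g := hg.differentiable (by norm_num)
  have hd0 : deriv g 0 = 0 := by
    have : IsLocalMin g 0 := by
      apply IsMinOn.isLocalMin (s := Set.univ) _ (by simp)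
      intro x _
      exact hmin x
    exact this.deriv_eq_zero
  -- deriv (deriv g) < 0 near 0
  have hcont : Continuous (deriv (deriv g)) := continuous_deriv_deriv hg
  have hev : ∀ᶠ y in nhds (0:ℝ), deriv (deriv g) y < 0 :=
    hcont.continuousAt.eventually_lt continuousAt_const hneg
  obtain ⟨δ, hδ, hball⟩ := Metric.eventually_nhds_iff.mp hev
  -- deriv g is strictly decreasing on (-δ, δ), so deriv g > 0 on (-δ, 0)
  have hderivg : ∀ x ∈ Set.Ioo (-δ) (0:ℝ), 0 < deriv g x := by
    intro x hx
    have hanti : StrictAntiOn (deriv g) (Set.Icc x 0) := by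
      apply strictAntiOn_of_deriv_neg (convex_Icc _ _)
        ((contDiff_one_deriv hg).continuous.continuousOn)
      intro y hy
      rw [interior_Icc] at hy
      apply hball
      rw [Real.dist_eq, abs_lt]
      constructor
      · nlinarith [hy.1, hx.1]
      · nlinarith [hy.2]
    have := hanti (Set.mem_Icc.mpr ⟨le_refl x, hx.2.le⟩) (Set.mem_Icc.mpr ⟨hx.2.le, le_refl 0⟩) hx.2
    rwa [hd0] at this
  -- then g is strictly increasing on [-δ/2, 0], contradicting minimality at 0
  have hmono : StrictMonoOn g (Set.Icc (-(δ/2)) 0) := by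
    apply strictMonoOn_of_deriv_pos (convex_Icc _ _) hdiff.continuous.continuousOn
    intro y hy
    rw [interior_Icc] at hy
    exact hderivg y ⟨by linarith [hy.1], hy.2⟩
  have : g (-(δ/2)) < g 0 :=
    hmono (Set.mem_Icc.mpr ⟨le_refl _, by linarith⟩) (Set.mem_Icc.mpr ⟨by linarith, le_refl 0⟩)
      (by linarith)
  exact absurd (hmin (-(δ/2))) (not_le.mpr this)

/-- **Sphere comparison for the second fundamental form (Proposition 8(i),
Euclidean case).** Let `K ⊂ ℝⁿ` be a `C²` submanifold, `p ∈ K`, `v` a unit tangent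
vector and `w` a unit normal vector at `p`, and `q = p + ε·w` with `ε > 0`. If the
open ball `B(q, ε)` is disjoint from `K`, then for the geodesic `α` of `K` with
`α(0) = p`, `α'(0) = v` one has `II_w^K(v,v) = ⟨α''(0), w⟩ ≤ 1/ε = II_w^S(v,v)`,
where `S = ∂B(q, ε)`. -/
theorem secondFundamentalForm_le_sphere {n k : ℕ}
    (K : Set (EuclideanSpace ℝ (Fin n)))
    (hK : IsC2Submanifold k K)
    (p v w : EuclideanSpace ℝ (Fin n)) (ε : ℝ) (hε : 0 < ε)
    (hp : p ∈ K)
    (hvT : v ∈ tangentConeAt ℝ K p) (hv : ‖v‖ = 1)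
    (hwN : IsNormalAt K p w) (hw : ‖w‖ = 1)
    (hdisj : Metric.ball (p + ε • w) ε ∩ K = ∅)
    (α : ℝ → EuclideanSpace ℝ (Fin n))
    (hα : ContDiff ℝ 2 α)
    (hαK : ∀ s, α s ∈ K) (hα0 : α 0 = p) (hα1 : deriv α 0 = v)
    (hgeo : ∀ s : ℝ, IsNormalAt K (α s) (deriv (deriv α) s)) :
    ⟪deriv (deriv α) 0, w⟫ ≤ 1 / ε := by
  set q : EuclideanSpace ℝ (Fin n) := p + ε • w with hq
  set g : ℝ → ℝ := fun s => ⟪α s - q, α s - q⟫ with hgdef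
  -- α is differentiable, deriv α is differentiable at 0
  have hαd : Differentiable ℝ α := hα.differentiable (by norm_num)
  have hα'd : Differentiable ℝ (deriv α) :=
    ((contDiff_succ_iff_deriv.mp (show ContDiff ℝ (1 + 1) α from hα)).2.2).differentiable
      (by norm_num)
  -- first derivative of g
  have hg' : ∀ s, HasDerivAt g (2 * ⟪deriv α s, α s - q⟫) s := by
    intro s
    have h1 : HasDerivAt (fun t => α t - q) (deriv α s) s :=
      ((hαd s).hasDerivAt).sub_const q
    have := h1.inner ℝ h1
    refine this.congr_deriv ?_
    rw [real_inner_comm]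
    ring
  have hderivg : deriv g = fun s => 2 * ⟪deriv α s, α s - q⟫ :=
    funext fun s => (hg' s).deriv
  -- second derivative of g at 0
  have hg'' : HasDerivAt (deriv g)
      (2 * (⟪deriv (deriv α) 0, α 0 - q⟫ + ⟪deriv α 0, deriv α 0⟫)) 0 := by
    rw [hderivg]
    have h1 : HasDerivAt (deriv α) (deriv (deriv α) 0) 0 := (hα'd 0).hasDerivAt
    have h2 : HasDerivAt (fun t => α t - q) (deriv α 0) 0 := ((hαd 0).hasDerivAt).sub_const q
    have := (h1.inner ℝ h2).const_mul (2:ℝ)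
    refine this.congr_deriv ?_
    ring
  -- g is C²
  have hgC2 : ContDiff ℝ 2 g := by
    have : ContDiff ℝ 2 (fun t => α t - q) := hα.sub contDiff_const
    exact this.inner ℝ this
  -- g has a minimum at 0
  have hmin : ∀ s, g 0 ≤ g s := by
    intro s
    have hnotball : α s ∉ Metric.ball q ε := by
      intro hmem
      have : α s ∈ Metric.ball q ε ∩ K := ⟨hmem, hαK s⟩
      rw [hdisj] at this
      exact this
    have hdist : ε ≤ dist (α s) q := not_lt.mp (fun h => hnotball (Metric.mem_ball.mpr h))
    have h0 : g 0 = ε ^ 2 := by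
      simp only [hgdef, hα0, hq]
      rw [real_inner_self_eq_norm_sq]
      have : p - (p + ε • w) = -(ε • w) := by abel
      rw [this, norm_neg, norm_smul, hw]
      simp [abs_of_pos hε]
    have hs : g s = ‖α s - q‖ ^ 2 := by
      simp only [hgdef]; rw [real_inner_self_eq_norm_sq]
    rw [h0, hs]
    have : ε ≤ ‖α s - q‖ := by rwa [dist_eq_norm] at hdist
    nlinarith [norm_nonneg (α s - q)]
  -- second derivative nonneg
  have hnn : 0 ≤ deriv (deriv g) 0 := second_deriv_nonneg_of_min hgC2 hmin
  rw [hg''.deriv] at hnn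
  -- compute
  have hαq : α 0 - q = -(ε • w) := by rw [hα0, hq]; abel
  rw [hαq, hα1, real_inner_self_eq_norm_sq, hv] at hnn
  have hiw : ⟪deriv (deriv α) 0, -(ε • w)⟫ = -(ε * ⟪deriv (deriv α) 0, w⟫) := by
    rw [inner_neg_right, real_inner_smul_right]
  rw [hiw] at hnn
  rw [le_div_iff₀ hε]
  nlinarith [hnn]
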